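/- Let F(X_1,…,X_d) = (1 + X_1⋯X_d(1 + X_d + ⋯ + X_d^{k−2})) / ((1−X_1)⋯(1−X_{d−1})(1 − X_1⋯X_{d−1}X_d^k)) with d ≥ 2, k ≥ 3. Then F(X_1^{−1},…,X_d^{−1}) = (−1)^d · X_1⋯X_d·(1 + X_d + ⋯ + X_d^{k−2} + X_1⋯X_{d−1}X_d^{k−1}) / ((1−X_1)⋯(1−X_{d−1})(1 − X_1⋯X_{d−1}X_d^k)) as rational functions. -/

import Mathlib

/-- The variable `X i` in the rational function field `ℚ(X₁,…,X_d)`. -/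
noncomputable def XV (d : ℕ) (i : Fin d) : FractionRing (MvPolynomial (Fin d) ℚ) :=
  algebraMap (MvPolynomial (Fin d) ℚ) (FractionRing (MvPolynomial (Fin d) ℚ)) (MvPolynomial.X i)

lemma aux4 {F : Type*} [Field F] (x P A S c e : F) (n : ℕ)
    (hx : x ≠ 0) (hP : P ≠ 0) (hA : A ≠ 0) (hB : 1 - P * x ^ (n + 2) ≠ 0)
    (hc : c * c = 1) (hce : c + e = 0) :
    (1 + (x⁻¹ * P⁻¹) * ((x ^ n)⁻¹ * S)) /
        ((c * P⁻¹ * A) * (-(1 - P * x ^ (n + 2)) * P⁻¹ * (x ^ (n + 2))⁻¹)) =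
      e * ((x * P) * (S + P * x ^ (n + 1))) / (A * (1 - P * x ^ (n + 2))) := by
  have he : e = -c := by linear_combination hce
  subst he
  have h1 : (c - 1) * (c + 1) = 0 := by linear_combination hc
  have hxn : x ^ (n + 2) ≠ 0 := pow_ne_zero _ hx
  have hc0 : c ≠ 0 := by
    intro h0; rw [h0] at hc; simp at hc
  have hD1 : (c * P⁻¹ * A) * (-(1 - P * x ^ (n + 2)) * P⁻¹ * (x ^ (n + 2))⁻¹) ≠ 0 := by
    apply mul_ne_zero
    · exact mul_ne_zero (mul_ne_zero hc0 (inv_ne_zero hP)) hA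
    · exact mul_ne_zero (mul_ne_zero (neg_ne_zero.2 hB) (inv_ne_zero hP)) (inv_ne_zero hxn)
  have hD2 : A * (1 - P * x ^ (n + 2)) ≠ 0 := mul_ne_zero hA hB
  rw [div_eq_div_iff hD1 hD2]
  rcases mul_eq_zero.1 h1 with h | h
  · have hc1 : c = 1 := by linear_combination h
    subst hc1
    field_simp
    ring
  · have hc1 : c = -1 := by linear_combination h
    subst hc1
    field_simp
    ring

set_option maxHeartbeats 1000000

/-- With `F(X₁,…,X_d) = (1 + X₁⋯X_d(1 + X_d + ⋯ + X_d^{k−2}))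
/((1−X₁)⋯(1−X_{d−1})(1 − X₁⋯X_{d−1}X_d^k))`, one has
`F(X₁⁻¹,…,X_d⁻¹) = (−1)^d · X₁⋯X_d·(1 + X_d + ⋯ + X_d^{k−2} + X₁⋯X_{d−1}X_d^{k−1})
/((1−X₁)⋯(1−X_{d−1})(1 − X₁⋯X_{d−1}X_d^k))` as rational functions. -/
theorem stmt4 (d k : ℕ) (hd : 2 ≤ d) (hk : 3 ≤ k) :
    (1 + (∏ i : Fin d, (XV d i)⁻¹) *
        ∑ j ∈ Finset.range (k - 1), ((XV d ⟨d - 1, by omega⟩)⁻¹) ^ j) /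
      ((∏ i ∈ Finset.univ.filter (fun i : Fin d => i.val < d - 1), (1 - (XV d i)⁻¹)) *
        (1 - (∏ i ∈ Finset.univ.filter (fun i : Fin d => i.val < d - 1), (XV d i)⁻¹) *
          ((XV d ⟨d - 1, by omega⟩)⁻¹) ^ k)) =
    (-1 : FractionRing (MvPolynomial (Fin d) ℚ)) ^ d *
      ((∏ i : Fin d, XV d i) *
        (∑ j ∈ Finset.range (k - 1), (XV d ⟨d - 1, by omega⟩) ^ j +
          (∏ i ∈ Finset.univ.filter (fun i : Fin d => i.val < d - 1), XV d i) *
            (XV d ⟨d - 1, by omega⟩) ^ (k - 1))) /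
      ((∏ i ∈ Finset.univ.filter (fun i : Fin d => i.val < d - 1), (1 - XV d i)) *
        (1 - (∏ i ∈ Finset.univ.filter (fun i : Fin d => i.val < d - 1), XV d i) *
          (XV d ⟨d - 1, by omega⟩) ^ k)) := by
  set K := FractionRing (MvPolynomial (Fin d) ℚ)
  have inj : Function.Injective (algebraMap (MvPolynomial (Fin d) ℚ) K) :=
    IsFractionRing.injective _ _
  have hx0 : ∀ i : Fin d, XV d i ≠ 0 := by
    intro i
    simp [XV, map_eq_zero_iff _ inj, MvPolynomial.X_ne_zero]
  have hx1 : ∀ i : Fin d, (1 : K) - XV d i ≠ 0 := by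
    intro i h
    rw [sub_eq_zero] at h
    have h' : (1 : MvPolynomial (Fin d) ℚ) = MvPolynomial.X i :=
      inj (by rw [map_one]; exact h)
    have h2 := congrArg (MvPolynomial.eval fun _ => (2:ℚ)) h'
    simp at h2
  set x : K := XV d ⟨d - 1, by omega⟩ with hxdef
  set T := Finset.univ.filter (fun i : Fin d => i.val < d - 1) with hT
  set P : K := ∏ i ∈ T, XV d i with hP
  set A : K := ∏ i ∈ T, (1 - XV d i) with hA
  set S : K := ∑ j ∈ Finset.range (k - 1), x ^ j with hS
  have hvi : ((⟨d - 1, by omega⟩ : Fin d) : ℕ) = d - 1 := rfl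
  have hTerase : T = Finset.univ.erase ⟨d - 1, by omega⟩ := by
    ext i
    simp only [hT, Finset.mem_filter, Finset.mem_univ, true_and, Finset.mem_erase, and_true,
      Ne, Fin.ext_iff, hvi]
    omega
  have hTcard : T.card = d - 1 := by
    rw [hTerase, Finset.card_erase_of_mem (Finset.mem_univ _)]
    simp
  have hP0 : P ≠ 0 := Finset.prod_ne_zero_iff.2 fun i _ => hx0 i
  have hA0 : A ≠ 0 := Finset.prod_ne_zero_iff.2 fun i _ => hx1 i
  have hxx : x ≠ 0 := hx0 _
  have hB0 : (1 : K) - P * x ^ k ≠ 0 := by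
    intro h
    rw [sub_eq_zero] at h
    have hPalg : P * x ^ k =
        algebraMap (MvPolynomial (Fin d) ℚ) K
          ((∏ i ∈ T, MvPolynomial.X i) * (MvPolynomial.X (⟨d - 1, by omega⟩ : Fin d)) ^ k) := by
      rw [map_mul, map_prod, map_pow]; rfl
    rw [hPalg] at h
    have h' : (1 : MvPolynomial (Fin d) ℚ) =
        (∏ i ∈ T, MvPolynomial.X i) * (MvPolynomial.X (⟨d - 1, by omega⟩ : Fin d)) ^ k :=
      inj (by rw [map_one]; exact h)
    have h2 := congrArg (MvPolynomial.eval fun _ => (2:ℚ)) h'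
    simp only [map_one, MvPolynomial.eval_mul, MvPolynomial.eval_pow,
      MvPolynomial.eval_prod, MvPolynomial.eval_X] at h2
    rw [Finset.prod_const] at h2
    have hgt : (1:ℚ) < 2 ^ T.card * 2 ^ k := by
      have h3 : (1:ℚ) ≤ 2 ^ T.card := one_le_pow₀ (by norm_num)
      have h4 : (2:ℚ) ≤ 2 ^ k := by
        calc (2:ℚ) = 2^1 := (pow_one 2).symm
        _ ≤ 2^k := pow_le_pow_right₀ (by norm_num) (by omega)
      nlinarith
    rw [← h2] at hgt
    norm_num at hgt
  have huniv : ∀ f : Fin d → K, (∏ i : Fin d, f i) = f ⟨d - 1, by omega⟩ * ∏ i ∈ T, f i := by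
    intro f
    simp only [hTerase]
    rw [Finset.mul_prod_erase _ _ (Finset.mem_univ _)]
  set n := k - 2 with hn
  have hk1 : k - 1 = n + 1 := by omega
  have hk2 : k = n + 2 := by omega
  have hSinv : (∑ j ∈ Finset.range (k - 1), (x⁻¹) ^ j) = (x ^ n)⁻¹ * S := by
    rw [hS, hk1, Finset.mul_sum,
      ← Finset.sum_range_reflect (fun j => (x ^ n)⁻¹ * x ^ j) (n + 1)]
    apply Finset.sum_congr rfl
    intro j hj
    simp only [Finset.mem_range] at hj
    rw [show n + 1 - 1 - j = n - j from by omega,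
      pow_sub₀ x hxx (by omega : j ≤ n), inv_pow,
      inv_mul_cancel_left₀ (pow_ne_zero n hxx)]
  have hAinv : (∏ i ∈ T, (1 - (XV d i)⁻¹)) = (-1) ^ (d - 1) * P⁻¹ * A := by
    have hfac : ∀ i ∈ T, (1 : K) - (XV d i)⁻¹ = (-1) * ((XV d i)⁻¹ * (1 - XV d i)) := by
      intro i _
      rw [neg_one_mul, mul_sub, mul_one, inv_mul_cancel₀ (hx0 i)]
      ring
    rw [Finset.prod_congr rfl hfac, Finset.prod_mul_distrib, Finset.prod_mul_distrib,
      Finset.prod_const, hTcard, Finset.prod_inv_distrib, ← hP, ← hA]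
    ring
  rw [huniv (fun i => (XV d i)⁻¹), huniv (XV d), ← hxdef, Finset.prod_inv_distrib, ← hP,
    hSinv, hAinv, hk1, hk2, inv_pow]
  have hC : (1 : K) - P⁻¹ * (x ^ (n + 2))⁻¹ =
      -(1 - P * x ^ (n + 2)) * P⁻¹ * (x ^ (n + 2))⁻¹ := by
    have e1 := mul_inv_cancel₀ hP0
    have e2 := mul_inv_cancel₀ (pow_ne_zero (n + 2) hxx)
    linear_combination (-1 : K) * e1 - P * P⁻¹ * e2
  rw [hC]
  rw [hk2] at hB0
  have hxn : x ^ (n + 2) ≠ 0 := pow_ne_zero _ hxx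
  rcases Nat.even_or_odd d with hev | hod
  · have h1 : ((-1 : K)) ^ d = 1 := hev.neg_one_pow
    have h2 : ((-1 : K)) ^ (d - 1) = -1 := by
      have hodd : Odd (d - 1) := by
        rcases hev with ⟨c, hc⟩; exact ⟨c - 1, by omega⟩
      exact hodd.neg_one_pow
    rw [h1, h2]
    exact aux4 x P A S (-1) 1 n hxx hP0 hA0 hB0 (by norm_num) (by norm_num)
  · have h1 : ((-1 : K)) ^ d = -1 := hod.neg_one_pow
    have h2 : ((-1 : K)) ^ (d - 1) = 1 := by
      have hevn : Even (d - 1) := by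
        rcases hod with ⟨c, hc⟩; exact ⟨c, by omega⟩
      exact hevn.neg_one_pow
    rw [h1, h2]
    exact aux4 x P A S 1 (-1) n hxx hP0 hA0 hB0 (by norm_num) (by norm_num)
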